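/- Let f(x) = Σ_{i≥0} aᵢxⁱ be a power series with Σᵢ|aᵢ| < ∞, and suppose there is ε > 0 with |a_{i+1}|/|aᵢ| > ε for all but finitely many i. If 0 < p < q ≤ 1 and (q−p)/q² < ε, then the set f({p,q}) := Σ_{i≥0} aᵢ·{p,q}^{⊙i} (infinite Minkowski sum, converging in the Hausdorff metric) has nonempty interior. -/

import Mathlib

open Pointwise

section aux
variable {p q : ℝ} (hp : 0 < p) (hpq : p < q) (hq : q ≤ 1)
include hp hpq hq

lemma qpred_mul_le (n : ℕ) : q ^ (n - 1) * q ≤ q ^ n := by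
  have hq0 : 0 < q := hp.trans hpq
  rcases Nat.eq_zero_or_pos n with rfl | hn
  · simpa using hq
  · rw [← pow_succ, Nat.sub_add_cancel hn]

omit hp hpq hq in
lemma pq_pow_mem_left : ∀ i : ℕ, p ^ i ∈ (({p, q} : Set ℝ) ^ i) := by
  intro i
  induction i with
  | zero => simp [Set.mem_one]
  | succ n ih =>
    rw [pow_succ, pow_succ]
    exact Set.mul_mem_mul ih (by simp)

omit hp hpq hq in
lemma pq_pow_mem_right : ∀ i : ℕ, q ^ i ∈ (({p, q} : Set ℝ) ^ i) := by
  intro i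
  induction i with
  | zero => simp [Set.mem_one]
  | succ n ih =>
    rw [pow_succ, pow_succ]
    exact Set.mul_mem_mul ih (by simp)

lemma pq_pow_lower (i : ℕ) : ∀ t : ℝ, p ^ i ≤ t → t ≤ q ^ i →
    ∃ x ∈ (({p, q} : Set ℝ) ^ i), x ≤ t ∧ t ≤ x + q ^ (i - 1) * (q - p) := by
  have hq0 : 0 < q := hp.trans hpq
  induction i with
  | zero =>
    intro t h1 h2
    refine ⟨1, by simp [Set.mem_one], by simpa using h1, ?_⟩
    simp only [pow_zero, Nat.zero_sub] at h2 ⊢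
    nlinarith
  | succ n ih =>
    intro t h1 h2
    have hgap := qpred_mul_le hp hpq hq n
    have epow : p ^ (n+1) = p ^ n * p := pow_succ p n
    have eqow : q ^ (n+1) = q ^ n * q := pow_succ q n
    have hpn : (0:ℝ) < p ^ n := pow_pos hp n
    have hqn : (0:ℝ) < q ^ n := pow_pos hq0 n
    rcases le_or_gt (p ^ n * q) t with hc | hc
    · have hd1 : p ^ n ≤ t / q := (le_div_iff₀ hq0).2 hc
      have hd2 : t / q ≤ q ^ n := by
        rw [div_le_iff₀ hq0]; linarith
      obtain ⟨x, hx, hx1, hx2⟩ := ih (t / q) hd1 hd2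
      have ht : t / q * q = t := div_mul_cancel₀ _ hq0.ne'
      refine ⟨x * q, ?_, ?_, ?_⟩
      · rw [pow_succ]
        exact Set.mul_mem_mul hx (by simp)
      · nlinarith
      · have h5 : t ≤ x * q + q ^ (n-1) * (q - p) * q := by nlinarith
        simp only [Nat.add_sub_cancel]
        nlinarith
    · refine ⟨p ^ (n+1), pq_pow_mem_left _, h1, ?_⟩
      have hple : p ^ n ≤ q ^ n := pow_le_pow_left₀ hp.le hpq.le n
      simp only [Nat.add_sub_cancel]
      nlinarith

lemma pq_pow_upper (i : ℕ) : ∀ t : ℝ, p ^ i ≤ t → t ≤ q ^ i →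
    ∃ x ∈ (({p, q} : Set ℝ) ^ i), t ≤ x ∧ x ≤ t + q ^ (i - 1) * (q - p) := by
  have hq0 : 0 < q := hp.trans hpq
  induction i with
  | zero =>
    intro t h1 h2
    refine ⟨1, by simp [Set.mem_one], by simpa using h2, ?_⟩
    simp only [pow_zero, Nat.zero_sub] at h1 ⊢
    nlinarith
  | succ n ih =>
    intro t h1 h2
    have hgap := qpred_mul_le hp hpq hq n
    have epow : p ^ (n+1) = p ^ n * p := pow_succ p n
    have eqow : q ^ (n+1) = q ^ n * q := pow_succ q n
    have hpn : (0:ℝ) < p ^ n := pow_pos hp n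
    have hqn : (0:ℝ) < q ^ n := pow_pos hq0 n
    have hqn1 : (0:ℝ) < q ^ (n-1) := pow_pos hq0 _
    rcases le_or_gt t (p * q ^ n) with hc | hc
    · have hd1 : p ^ n ≤ t / p := by
        rw [le_div_iff₀ hp]; linarith
      have hd2 : t / p ≤ q ^ n := (div_le_iff₀ hp).2 (by nlinarith)
      obtain ⟨x, hx, hx1, hx2⟩ := ih (t / p) hd1 hd2
      have ht : t / p * p = t := div_mul_cancel₀ _ hp.ne'
      refine ⟨p * x, ?_, ?_, ?_⟩
      · rw [pow_succ']
        exact Set.mul_mem_mul (by simp) hx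
      · nlinarith
      · have h5 : p * x ≤ t + q ^ (n-1) * (q - p) * p := by nlinarith
        simp only [Nat.add_sub_cancel]
        nlinarith
    · refine ⟨q ^ (n+1), pq_pow_mem_right _, h2, ?_⟩
      simp only [Nat.add_sub_cancel]
      nlinarith

lemma pq_scaled (a : ℝ) (i : ℕ) (t : ℝ)
    (h1 : min (a * p ^ i) (a * q ^ i) ≤ t) (h2 : t ≤ max (a * p ^ i) (a * q ^ i)) :
    ∃ c ∈ a • (({p, q} : Set ℝ) ^ i), c ≤ t ∧ t ≤ c + |a| * (q ^ (i - 1) * (q - p)) := by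
  have hq0 : 0 < q := hp.trans hpq
  have hple : p ^ i ≤ q ^ i := pow_le_pow_left₀ hp.le hpq.le i
  rcases lt_trichotomy a 0 with ha | ha | ha
  · have hmin : min (a * p ^ i) (a * q ^ i) = a * q ^ i := by
      apply min_eq_right; nlinarith
    have hmax : max (a * p ^ i) (a * q ^ i) = a * p ^ i := by
      apply max_eq_left; nlinarith
    rw [hmin] at h1; rw [hmax] at h2
    have hs1 : p ^ i ≤ t / a := by rw [le_div_iff_of_neg ha]; linarith
    have hs2 : t / a ≤ q ^ i := by rw [div_le_iff_of_neg ha]; linarith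
    obtain ⟨x, hx, hx1, hx2⟩ := pq_pow_upper hp hpq hq i (t / a) hs1 hs2
    refine ⟨a * x, ⟨x, hx, rfl⟩, ?_, ?_⟩
    · have := mul_le_mul_of_nonpos_left hx1 ha.le
      rwa [mul_div_cancel₀ _ ha.ne] at this
    · have := mul_le_mul_of_nonpos_left hx2 ha.le
      rw [mul_add, mul_div_cancel₀ _ ha.ne] at this
      have habs : |a| = -a := abs_of_neg ha
      nlinarith
  · subst ha
    refine ⟨0, ⟨p ^ i, pq_pow_mem_left i, by simp⟩, ?_, ?_⟩
    · simpa using h1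
    · simp only [abs_zero, zero_mul, add_zero]
      simpa using h2
  · have hmin : min (a * p ^ i) (a * q ^ i) = a * p ^ i := by
      apply min_eq_left; nlinarith
    have hmax : max (a * p ^ i) (a * q ^ i) = a * q ^ i := by
      apply max_eq_right; nlinarith
    rw [hmin] at h1; rw [hmax] at h2
    have hs1 : p ^ i ≤ t / a := by rw [le_div_iff₀ ha]; linarith
    have hs2 : t / a ≤ q ^ i := by rw [div_le_iff₀ ha]; linarith
    obtain ⟨x, hx, hx1, hx2⟩ := pq_pow_lower hp hpq hq i (t / a) hs1 hs2
    refine ⟨a * x, ⟨x, hx, rfl⟩, ?_, ?_⟩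
    · have := mul_le_mul_of_nonneg_left hx1 ha.le
      rwa [mul_div_cancel₀ _ ha.ne'] at this
    · have := mul_le_mul_of_nonneg_left hx2 ha.le
      rw [mul_add, mul_div_cancel₀ _ ha.ne'] at this
      have habs : |a| = a := abs_of_pos ha
      nlinarith

end aux


lemma tsum_tail_rec (f : ℕ → ℝ) (hf : Summable f) (n : ℕ) :
    ∑' k, f (k + n) = f n + ∑' k, f (k + (n + 1)) := by
  have hs : Summable fun k => f (k + n) := (summable_nat_add_iff n).2 hf
  rw [Summable.tsum_eq_zero_add hs]
  congr 1
  · simp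
  · apply tsum_congr; intro k; congr 1; omega

lemma tsum_tail_tendsto (f : ℕ → ℝ) (hf : Summable f) :
    Filter.Tendsto (fun n => ∑' k, f (k + n)) Filter.atTop (nhds 0) := by
  have h1 := hf.hasSum.tendsto_sum_nat
  have h : (fun n => ∑' k, f (k + n)) =
      fun n => (∑' i, f i) - ∑ i ∈ Finset.range n, f i := by
    funext n
    have := Summable.sum_add_tsum_nat_add n hf
    linarith
  rw [h]
  simpa using (tendsto_const_nhds (x := ∑' i, f i)).sub h1

lemma greedy_lemma (C : ℕ → Set ℝ) (mf Mf g : ℕ → ℝ)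
    (hm : Summable mf) (hM : Summable Mf) (N : ℕ)
    (happrox : ∀ n, N ≤ n → ∀ t, mf n ≤ t → t ≤ Mf n → ∃ c ∈ C n, c ≤ t ∧ t ≤ c + g n)
    (hMmem : ∀ n, N ≤ n → Mf n ∈ C n)
    (hgap : ∀ n, N ≤ n → g n ≤ (∑' k, Mf (k + (n + 1))) - ∑' k, mf (k + (n + 1)))
    (t : ℝ) (ht1 : ∑' k, mf (k + N) ≤ t) (ht2 : t ≤ ∑' k, Mf (k + N)) :
    ∀ n, N ≤ n → ∃ y ∈ ∑ i ∈ Finset.Ico N n, C i,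
      (∑' k, mf (k + n)) ≤ t - y ∧ t - y ≤ ∑' k, Mf (k + n) := by
  intro n hn
  induction n, hn using Nat.le_induction with
  | base =>
    refine ⟨0, ?_, by simpa using ht1, by simpa using ht2⟩
    rw [Finset.Ico_self, Finset.sum_empty]
    exact Set.zero_mem_zero
  | succ n hn ih =>
    obtain ⟨y, hy, h1, h2⟩ := ih
    have hmrec := tsum_tail_rec mf hm n
    have hMrec := tsum_tail_rec Mf hM n
    have hg := hgap n hn
    rcases le_or_gt (t - y - ∑' k, mf (k + (n + 1))) (Mf n) with hcase | hcase
    · obtain ⟨c, hc, hc1, hc2⟩ := happrox n hn (t - y - ∑' k, mf (k + (n + 1)))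
        (by linarith) hcase
      refine ⟨y + c, ?_, by linarith, by linarith⟩
      rw [Finset.sum_Ico_succ_top hn]
      exact Set.add_mem_add hy hc
    · refine ⟨y + Mf n, ?_, by linarith, by linarith⟩
      rw [Finset.sum_Ico_succ_top hn]
      exact Set.add_mem_add hy (hMmem n hn)


set_option maxHeartbeats 1000000 in
theorem interior_nonempty_fpq (a : ℕ → ℝ) (hsum : Summable (fun i => |a i|))
    (ε : ℝ) (hε : 0 < ε) (hratio : ∀ᶠ i in Filter.atTop, ε < |a (i + 1)| / |a i|)
    (p q : ℝ) (hp : 0 < p) (hpq : p < q) (hq : q ≤ 1) (hpqε : (q - p) / q ^ 2 < ε)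
    (F : Set ℝ) (hF : IsCompact F) (hFne : F.Nonempty)
    (hlim : Filter.Tendsto
      (fun n => Metric.hausdorffDist
        (∑ i ∈ Finset.range n, a i • (({p, q} : Set ℝ) ^ i)) F)
      Filter.atTop (nhds 0)) :
    (interior F).Nonempty := by
  have hq0 : 0 < q := hp.trans hpq
  set C : ℕ → Set ℝ := fun i => a i • (({p, q} : Set ℝ) ^ i) with hCdef
  set mf : ℕ → ℝ := fun i => min (a i * p ^ i) (a i * q ^ i) with hmfdef
  set Mf : ℕ → ℝ := fun i => max (a i * p ^ i) (a i * q ^ i) with hMfdef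
  -- summability
  have habsb : ∀ (i : ℕ) (x : ℝ), 0 < x → x ≤ q → |a i * x ^ i| ≤ |a i| := by
    intro i x hx hxq
    rw [abs_mul, abs_pow, abs_of_pos hx]
    have : x ^ i ≤ 1 := pow_le_one₀ hx.le (hxq.trans hq)
    nlinarith [abs_nonneg (a i), pow_pos hx i]
  have hm : Summable mf := by
    apply Summable.of_norm_bounded hsum
    intro i
    rw [Real.norm_eq_abs]
    exact (abs_min_le_max_abs_abs).trans
      (max_le (habsb i p hp hpq.le) (habsb i q hq0 le_rfl))
  have hM : Summable Mf := by
    apply Summable.of_norm_bounded hsum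
    intro i
    rw [Real.norm_eq_abs]
    exact (abs_max_le_max_abs_abs).trans
      (max_le (habsb i p hp hpq.le) (habsb i q hq0 le_rfl))
  have hMm : ∀ i : ℕ, Mf i - mf i = |a i| * (q ^ i - p ^ i) := by
    intro i
    rw [hMfdef, hmfdef]
    simp only
    rw [max_sub_min_eq_abs, ← mul_sub, abs_mul,
      abs_of_nonneg (sub_nonneg.2 (pow_le_pow_left₀ hp.le hpq.le i))]
  -- constants
  obtain ⟨N₀, hN₀⟩ := Filter.eventually_atTop.mp hratio
  have hanz : ∀ n, N₀ ≤ n → 0 < |a n| := by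
    intro n hn
    rcases (abs_nonneg (a n)).lt_or_eq with h | h
    · exact h
    · exfalso
      have h2 := hN₀ n hn
      rw [← h, div_zero] at h2
      linarith
  have hratio' : ∀ n, N₀ ≤ n → ε * |a n| ≤ |a (n + 1)| := fun n hn =>
    ((lt_div_iff₀ (hanz n hn)).1 (hN₀ n hn)).le
  have hq2pos : (0:ℝ) < ε * q ^ 2 := by positivity
  have hδ : 0 < 1 - (q - p) / (ε * q ^ 2) := by
    rw [sub_pos, div_lt_one hq2pos]
    have := (div_lt_iff₀ (by positivity : (0:ℝ) < q ^ 2)).1 hpqε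
    linarith
  have hr1 : p / q < 1 := (div_lt_one hq0).2 hpq
  obtain ⟨N₁, hN₁⟩ := Filter.eventually_atTop.mp
    ((tendsto_pow_atTop_nhds_zero_of_lt_one (by positivity) hr1).eventually
      (gt_mem_nhds hδ))
  set N := max (max N₀ N₁) 1 with hNdef
  have hNN₀ : N₀ ≤ N := le_trans (le_max_left _ _) (le_max_left _ _)
  have hNN₁ : N₁ ≤ N := le_trans (le_max_right _ _) (le_max_left _ _)
  have hN1 : 1 ≤ N := le_max_right _ _
  -- key analytic inequality
  have hkey : ∀ n, N ≤ n →
      |a n| * (q ^ (n - 1) * (q - p)) ≤ |a (n + 1)| * (q ^ (n + 1) - p ^ (n + 1)) := by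
    intro n hn
    have hn0 : N₀ ≤ n := hNN₀.trans hn
    have hn1 : N₁ ≤ n := hNN₁.trans hn
    have hn2 : 1 ≤ n := hN1.trans hn
    have h1 : (p / q) ^ (n + 1) < 1 - (q - p) / (ε * q ^ 2) := hN₁ (n + 1) (by omega)
    have hq2 : q ^ (n + 1) = q ^ (n - 1) * q ^ 2 := by
      rw [← pow_add]; congr 1; omega
    have hpq' : p ^ (n + 1) = (p / q) ^ (n + 1) * q ^ (n + 1) := by
      rw [div_pow]; field_simp
    have hqpos : (0:ℝ) < q ^ (n + 1) := pow_pos hq0 _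
    have h2 : (q - p) * q ^ (n - 1) ≤ ε * (q ^ (n + 1) - p ^ (n + 1)) := by
      have h3 := mul_lt_mul_of_pos_right h1 hqpos
      rw [← hpq'] at h3
      have e : (q - p) / (ε * q ^ 2) * q ^ (n + 1) = (q - p) * q ^ (n - 1) / ε := by
        rw [hq2]; field_simp
      rw [sub_mul, one_mul, e] at h3
      have h4 : (q - p) * q ^ (n - 1) / ε ≤ q ^ (n + 1) - p ^ (n + 1) := by linarith
      calc (q - p) * q ^ (n - 1) = ((q - p) * q ^ (n - 1) / ε) * ε := by field_simp
        _ ≤ (q ^ (n + 1) - p ^ (n + 1)) * ε := mul_le_mul_of_nonneg_right h4 hε.le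
        _ = ε * (q ^ (n + 1) - p ^ (n + 1)) := by ring
    have hge : 0 ≤ q ^ (n + 1) - p ^ (n + 1) :=
      sub_nonneg.2 (pow_le_pow_left₀ hp.le hpq.le (n + 1))
    calc |a n| * (q ^ (n - 1) * (q - p)) = |a n| * ((q - p) * q ^ (n - 1)) := by ring
      _ ≤ |a n| * (ε * (q ^ (n + 1) - p ^ (n + 1))) :=
        mul_le_mul_of_nonneg_left h2 (abs_nonneg _)
      _ = (ε * |a n|) * (q ^ (n + 1) - p ^ (n + 1)) := by ring
      _ ≤ |a (n + 1)| * (q ^ (n + 1) - p ^ (n + 1)) :=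
        mul_le_mul_of_nonneg_right (hratio' n hn0) hge
  -- summable shifted differences
  have hdsum : ∀ n : ℕ, Summable fun k => Mf (k + n) - mf (k + n) :=
    fun n => ((summable_nat_add_iff n).2 hM).sub ((summable_nat_add_iff n).2 hm)
  have hdiff : ∀ n : ℕ, (∑' k, Mf (k + n)) - ∑' k, mf (k + n)
      = ∑' k, (Mf (k + n) - mf (k + n)) :=
    fun n => (Summable.tsum_sub ((summable_nat_add_iff n).2 hM) ((summable_nat_add_iff n).2 hm)).symm
  have hdnonneg : ∀ i : ℕ, 0 ≤ Mf i - mf i := fun i => sub_nonneg.2 (min_le_max)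
  have htail_ge : ∀ n : ℕ, Mf n - mf n ≤ (∑' k, Mf (k + n)) - ∑' k, mf (k + n) := by
    intro n
    rw [hdiff n]
    have := Summable.le_tsum (hdsum n) 0 (fun j _ => hdnonneg (j + n))
    simpa using this
  -- gap hypothesis for greedy
  have hgap : ∀ n, N ≤ n → |a n| * (q ^ (n - 1) * (q - p))
      ≤ (∑' k, Mf (k + (n + 1))) - ∑' k, mf (k + (n + 1)) := by
    intro n hn
    refine (hkey n hn).trans ?_
    rw [← hMm (n + 1)]
    exact htail_ge (n + 1)
  -- approx hypothesis
  have happrox : ∀ n, N ≤ n → ∀ t, mf n ≤ t → t ≤ Mf n →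
      ∃ c ∈ C n, c ≤ t ∧ t ≤ c + |a n| * (q ^ (n - 1) * (q - p)) :=
    fun n _ t h1 h2 => pq_scaled hp hpq hq (a n) n t h1 h2
  -- Mf mem
  have hMmem : ∀ n, N ≤ n → Mf n ∈ C n := by
    intro n _
    rcases le_total (a n * p ^ n) (a n * q ^ n) with h | h
    · rw [hMfdef]; simp only [max_eq_right h]
      simpa [smul_eq_mul] using Set.smul_mem_smul_set (a := a n) (pq_pow_mem_right (p := p) n)
    · rw [hMfdef]; simp only [max_eq_left h]
      simpa [smul_eq_mul] using Set.smul_mem_smul_set (a := a n) (pq_pow_mem_left (q := q) n)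
  -- head element
  set c₀ : ℝ := ∑ i ∈ Finset.range N, a i * p ^ i with hc₀def
  have hc₀ : c₀ ∈ ∑ i ∈ Finset.range N, C i := by
    apply Set.finset_sum_mem_finset_sum
    intro i _
    simpa [smul_eq_mul] using Set.smul_mem_smul_set (a := a i) (pq_pow_mem_left (q := q) i)
  -- finiteness / boundedness of partial sums
  have hEfin : ∀ i : ℕ, (({p, q} : Set ℝ) ^ i).Finite := by
    intro i
    induction i with
    | zero => rw [pow_zero]; exact Set.finite_one
    | succ n ih =>
      rw [pow_succ]
      exact ih.mul (Set.Finite.insert p (Set.finite_singleton q))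
  have hfinS : ∀ n : ℕ, (∑ i ∈ Finset.range n, C i).Finite := by
    intro n
    induction n with
    | zero => rw [Finset.range_zero, Finset.sum_empty]; exact Set.finite_zero
    | succ n ih =>
      rw [Finset.sum_range_succ]
      exact ih.add ((hEfin n).smul_set)
  -- main inclusion
  have hsub : Set.Icc (c₀ + ∑' k, mf (k + N)) (c₀ + ∑' k, Mf (k + N)) ⊆ F := by
    intro x hx
    have key : ∀ n, N ≤ n → Metric.infDist x F ≤
        (|∑' k, mf (k + n)| + |∑' k, Mf (k + n)|) +
          Metric.hausdorffDist (∑ i ∈ Finset.range n, C i) F := by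
      intro n hn
      obtain ⟨y, hy, h1, h2⟩ := greedy_lemma C mf Mf
        (fun n => |a n| * (q ^ (n - 1) * (q - p))) hm hM N happrox hMmem hgap
        (x - c₀) (by linarith [hx.1]) (by linarith [hx.2]) n hn
      have hzS : c₀ + y ∈ ∑ i ∈ Finset.range n, C i := by
        have hsplit : (∑ i ∈ Finset.range N, C i) + ∑ i ∈ Finset.Ico N n, C i
            = ∑ i ∈ Finset.range n, C i := by
          rw [Finset.range_eq_Ico, Finset.range_eq_Ico]
          exact Finset.sum_Ico_consecutive _ (Nat.zero_le N) hn
        rw [← hsplit]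
        exact Set.add_mem_add hc₀ hy
      have hdxz : dist x (c₀ + y) ≤ |∑' k, mf (k + n)| + |∑' k, Mf (k + n)| := by
        rw [Real.dist_eq, show x - (c₀ + y) = x - c₀ - y by ring, abs_le]
        constructor
        · have := neg_abs_le (∑' k, mf (k + n))
          have := abs_nonneg (∑' k, Mf (k + n))
          linarith
        · have := le_abs_self (∑' k, Mf (k + n))
          have := abs_nonneg (∑' k, mf (k + n))
          linarith
      have hED : EMetric.hausdorffEdist (∑ i ∈ Finset.range n, C i) F ≠ ⊤ :=
        Metric.hausdorffEdist_ne_top_of_nonempty_of_bounded ⟨c₀ + y, hzS⟩ hFne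
          ((hfinS n).isBounded) hF.isBounded
      calc Metric.infDist x F ≤ Metric.infDist (c₀ + y) F + dist x (c₀ + y) :=
            Metric.infDist_le_infDist_add_dist
        _ ≤ Metric.hausdorffDist (∑ i ∈ Finset.range n, C i) F + dist x (c₀ + y) :=
            add_le_add_left (Metric.infDist_le_hausdorffDist_of_mem hzS hED) _
        _ ≤ _ := by linarith
    have hlim2 : Filter.Tendsto (fun n => (|∑' k, mf (k + n)| + |∑' k, Mf (k + n)|) +
        Metric.hausdorffDist (∑ i ∈ Finset.range n, C i) F) Filter.atTop (nhds 0) := by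
      have h1 := (tsum_tail_tendsto mf hm).abs
      have h2 := (tsum_tail_tendsto Mf hM).abs
      simpa using (h1.add h2).add hlim
    have hle : Metric.infDist x F ≤ 0 :=
      ge_of_tendsto hlim2 (Filter.eventually_atTop.2 ⟨N, key⟩)
    have heq : Metric.infDist x F = 0 := le_antisymm hle Metric.infDist_nonneg
    exact (hF.isClosed.mem_iff_infDist_zero hFne).2 heq
  -- positive length
  have hlen : (∑' k, mf (k + N)) < ∑' k, Mf (k + N) := by
    have hpos : 0 < Mf N - mf N := by
      rw [hMm N]
      have h1 : 0 < |a N| := hanz N hNN₀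
      have h2 : p ^ N < q ^ N := pow_lt_pow_left₀ hpq hp.le (by omega)
      nlinarith
    have := htail_ge N
    linarith
  -- conclusion
  refine ⟨((c₀ + ∑' k, mf (k + N)) + (c₀ + ∑' k, Mf (k + N))) / 2, ?_⟩
  apply interior_mono hsub
  rw [interior_Icc]
  constructor <;> [linarith; linarith]
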